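/- Let n be a positive integer and let G be a finite tree on a vertex set V with positive edge weights whose number of leaves is at most 2n, and let d_T denote the associated tree metric on V. Then there exists a map f : V → ℝ^n such that d_1(f(u), f(v)) = d_T(u, v) for all u, v ∈ V. (That is, a finite metric tree with at most 2n leaves can be embedded isometrically into (ℝ^n, d_1).) -/

import Mathlib

open SimpleGraph Finset

set_option linter.unusedSectionVars false
set_option linter.unusedVariables false
set_option maxHeartbeats 1600000

namespace TreeEmbed

open scoped Classical

variable {V : Type*} [Fintype V] [DecidableEq V] {G : SimpleGraph V}

open Classical in
/-- The unique path between two vertices of a tree. -/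
noncomputable def tp (hG : G.IsTree) (u v : V) : G.Walk u v :=
  (hG.existsUnique_path u v).exists.choose

lemma tp_isPath (hG : G.IsTree) (u v : V) : (tp hG u v).IsPath :=
  (hG.existsUnique_path u v).exists.choose_spec

lemma tp_unique (hG : G.IsTree) {u v : V} {p : G.Walk u v} (hp : p.IsPath) :
    p = tp hG u v :=
  ((hG.existsUnique_path u v).unique hp (tp_isPath hG u v))

lemma tp_self (hG : G.IsTree) (u : V) : tp hG u u = Walk.nil :=
  (tp_unique hG (Walk.IsPath.nil)).symm

/-- Same-side relation with respect to a (deleted) edge. -/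
def SS (e : Sym2 V) (u v : V) : Prop := (G.deleteEdges {e}).Reachable u v

lemma SS.refl (e : Sym2 V) (u : V) : SS (G := G) e u u := Reachable.refl u

lemma SS.symm' {e : Sym2 V} {u v : V} (h : SS (G := G) e u v) : SS (G := G) e v u :=
  Reachable.symm h

lemma SS.trans' {e : Sym2 V} {u v z : V} (h : SS (G := G) e u v) (h' : SS (G := G) e v z) :
    SS (G := G) e u z := Reachable.trans h h'

/-- Membership of an edge in the tree path characterizes the side relation. -/
lemma mem_tp_iff (hG : G.IsTree) {u v : V} (e : Sym2 V) :
    e ∈ (tp hG u v).edges ↔ ¬ SS (G := G) e u v := by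
  constructor
  · intro he hss
    obtain ⟨W⟩ := hss
    have hW : ∀ f ∈ W.edges, f ∈ G.edgeSet := by
      intro f hf
      have := W.edges_subset_edgeSet hf
      rw [edgeSet_deleteEdges] at this
      exact this.1
    set W' : G.Walk u v := W.transfer G hW with hW'
    have hWe : e ∉ W'.edges := by
      rw [Walk.edges_transfer]
      intro hmem
      have := W.edges_subset_edgeSet hmem
      rw [edgeSet_deleteEdges] at this
      exact this.2 rfl
    have hbp : W'.bypass.IsPath := Walk.bypass_isPath W'
    have : W'.bypass = tp hG u v := tp_unique hG hbp
    have : e ∈ W'.bypass.edges := this ▸ he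
    exact hWe (Walk.edges_bypass_subset W' this)
  · intro hss
    by_contra he
    exact hss ⟨(tp hG u v).toDeleteEdges {e} (by intro f hf; simp; rintro rfl; exact he hf)⟩

private lemma two_sides_aux {x y : V} : ∀ {v z : V} (_ : G.Walk v z),
    (SS (G := G) (s(x, y)) z x ∨ SS (G := G) (s(x, y)) z y) →
    (SS (G := G) (s(x, y)) v x ∨ SS (G := G) (s(x, y)) v y) := by
  intro v z W
  induction W with
  | nil => exact id
  | @cons a b c h p ih =>
    intro hz
    by_cases hab : s(a, b) = s(x, y)
    · rw [Sym2.eq_iff] at hab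
      rcases hab with ⟨rfl, rfl⟩ | ⟨rfl, rfl⟩
      · exact Or.inl (Reachable.refl _)
      · exact Or.inr (Reachable.refl _)
    · have hadj : (G.deleteEdges {s(x,y)}).Adj a b := by
        simp only [deleteEdges_adj, Set.mem_singleton_iff]
        exact ⟨h, hab⟩
      rcases ih hz with hb | hb
      · exact Or.inl ((Adj.reachable hadj).trans hb)
      · exact Or.inr ((Adj.reachable hadj).trans hb)

/-- every vertex is on the side of x or of y, for an edge s(x,y) -/
lemma two_sides (hG : G.IsTree) {x y : V} (v : V) :
    SS (G := G) (s(x, y)) v x ∨ SS (G := G) (s(x, y)) v y := by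
  obtain ⟨W⟩ := hG.isConnected.preconnected v x
  exact two_sides_aux W (Or.inl (Reachable.refl _))

/-- deleting an edge of a tree separates its endpoints -/
lemma bridge_not_SS (hG : G.IsTree) {x y : V} (hxy : G.Adj x y) :
    ¬ SS (G := G) (s(x, y)) x y := by
  have hb : G.IsBridge s(x, y) :=
    (isAcyclic_iff_forall_edge_isBridge.mp hG.IsAcyclic) (by simpa using hxy)
  rw [isBridge_iff] at hb
  exact hb

/-- there are at most two sides -/
lemma P2 (hG : G.IsTree) {e : Sym2 V} {u v z : V}
    (h1 : ¬ SS (G := G) e u z) (h2 : ¬ SS (G := G) e v z) : SS (G := G) e u v := by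
  induction e using Sym2.inductionOn with
  | hf x y =>
    rcases two_sides hG (G := G) (x := x) (y := y) u with hu | hu <;>
    rcases two_sides hG (G := G) (x := x) (y := y) v with hv | hv <;>
    rcases two_sides hG (G := G) (x := x) (y := y) z with hz | hz <;>
      first
        | exact hu.trans hv.symm
        | exact absurd (hu.trans hz.symm) h1
        | exact absurd (hv.trans hz.symm) h2

/-- symmetry of path-edge membership -/
lemma mem_tp_symm (hG : G.IsTree) {u v : V} {e : Sym2 V} :
    e ∈ (tp hG u v).edges ↔ e ∈ (tp hG v u).edges := by
  have : (tp hG u v).reverse = tp hG v u := tp_unique hG ((tp_isPath hG u v).reverse)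
  rw [← this, Walk.edges_reverse, List.mem_reverse]

/-- vertices on the tree path between same-side vertices are on the same side -/
lemma support_side (hG : G.IsTree) {e : Sym2 V} {u v z : V}
    (huv : SS (G := G) e u v) (hz : z ∈ (tp hG u v).support) : SS (G := G) e u z := by
  have he : e ∉ (tp hG u v).edges := by rw [mem_tp_iff hG]; exact not_not_intro huv
  have h1 : (tp hG u v).takeUntil z hz = tp hG u z :=
    tp_unique hG ((tp_isPath hG u v).takeUntil hz)
  have h2 : e ∉ (tp hG u z).edges := by
    rw [← h1]; intro hmem; exact he (Walk.edges_takeUntil_subset _ hz hmem)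
  rw [mem_tp_iff hG] at h2; exact not_not.mp h2

/-- the two endpoints of an edge e' ≠ e are on the same side of e -/
lemma edge_same_side (hG : G.IsTree) {e : Sym2 V} {x' y' : V} (h : G.Adj x' y')
    (hne : s(x', y') ≠ e) : SS (G := G) e x' y' := by
  refine ⟨Walk.cons ?_ Walk.nil⟩
  simp only [deleteEdges_adj, Set.mem_singleton_iff]
  exact ⟨h, hne⟩

/-- transfer of same-sideness: if z, z' are on the same side of e and both endpoints
of e' are on the other side... more precisely not on z's side, then z,z' are on the
same side of e' as well. -/
lemma side_transfer (hG : G.IsTree) {e e' : Sym2 V} {z z' : V}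
    (h : SS (G := G) e z z')
    (hq : ∀ q ∈ e', ¬ SS (G := G) e z q) : SS (G := G) e' z z' := by
  obtain ⟨W⟩ := h
  have hWe' : e' ∉ W.edges := by
    intro hmem
    induction e' using Sym2.inductionOn with
    | hf a b =>
      have ha : a ∈ W.support := W.fst_mem_support_of_mem_edges hmem
      have : (G.deleteEdges {e}).Reachable z a := ⟨W.takeUntil a ha⟩
      exact hq a (Sym2.mem_mk_left a b) this
  refine ⟨W.transfer (G.deleteEdges {e'}) ?_⟩
  intro f hf
  have hfG := W.edges_subset_edgeSet hf
  rw [edgeSet_deleteEdges] at hfG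
  rw [edgeSet_deleteEdges]
  exact ⟨hfG.1, by rintro rfl; exact hWe' hf⟩

lemma sign_aux (hG : G.IsTree) {α β u v : V} {e e' : Sym2 V}
    (he_sp : e ∈ (tp hG α β).edges) (he'_sp : e' ∈ (tp hG α β).edges)
    (he_uv : e ∈ (tp hG u v).edges) (he'_uv : e' ∈ (tp hG u v).edges)
    (h1 : ¬ SS (G := G) e α u) (h2 : SS (G := G) e' α u) : False := by
  have he'mem : e' ∈ G.edgeSet := Walk.edges_subset_edgeSet _ he'_sp
  by_cases hee' : e' = e
  · exact h1 (hee' ▸ h2)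
  have hαβ : ¬ SS (G := G) e α β := (mem_tp_iff hG e).mp he_sp
  have hαβ' : ¬ SS (G := G) e' α β := (mem_tp_iff hG e').mp he'_sp
  have huv : ¬ SS (G := G) e u v := (mem_tp_iff hG e).mp he_uv
  have huv' : ¬ SS (G := G) e' u v := (mem_tp_iff hG e').mp he'_uv
  have hEαv : SS (G := G) e α v := P2 hG h1 (fun h => huv h.symm)
  have hne'v : ¬ SS (G := G) e' α v := fun h => huv' (h2.symm.trans h)
  clear he_sp he'_sp he_uv he'_uv
  revert he'mem hαβ' huv' hne'v hee' h2
  induction e' using Sym2.inductionOn with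
  | hf x' y' =>
    intro h2 he'mem hee' hαβ' huv' hne'v
    rw [mem_edgeSet] at he'mem
    have hxy' : SS (G := G) e x' y' := edge_same_side hG he'mem hee'
    by_cases hc : SS (G := G) e α x'
    · have huβ : SS (G := G) e u β := P2 hG (fun h => h1 h.symm) (fun h => hαβ h.symm)
      have hq : ∀ q ∈ (s(x', y') : Sym2 V), ¬ SS (G := G) e u q := by
        intro q hqmem
        rw [Sym2.mem_iff] at hqmem
        rcases hqmem with rfl | rfl
        · exact fun h => h1 (hc.trans h.symm)
        · exact fun h => h1 ((hc.trans hxy').trans h.symm)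
      have : SS (G := G) s(x', y') u β := side_transfer hG huβ hq
      exact hαβ' (h2.trans this)
    · have hq : ∀ q ∈ (s(x', y') : Sym2 V), ¬ SS (G := G) e α q := by
        intro q hqmem
        rw [Sym2.mem_iff] at hqmem
        rcases hqmem with rfl | rfl
        · exact hc
        · exact fun h => hc (h.trans hxy'.symm)
      have : SS (G := G) s(x', y') α v := side_transfer hG hEαv hq
      exact hne'v this

/-- sign constancy along the spine -/
lemma sign_const (hG : G.IsTree) {α β u v : V} {e e' : Sym2 V}
    (he_sp : e ∈ (tp hG α β).edges) (he'_sp : e' ∈ (tp hG α β).edges)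
    (he_uv : e ∈ (tp hG u v).edges) (he'_uv : e' ∈ (tp hG u v).edges) :
    SS (G := G) e α u ↔ SS (G := G) e' α u := by
  constructor
  · intro h
    by_contra h'
    exact sign_aux hG he'_sp he_sp he'_uv he_uv h' h
  · intro h
    by_contra h'
    exact sign_aux hG he_sp he'_sp he_uv he'_uv h' h
noncomputable def DD (hG : G.IsTree) (w : Sym2 V → ℝ) (u v : V) : ℝ :=
  ((tp hG u v).edges.map w).sum

lemma DD_eq_sum (hG : G.IsTree) (w : Sym2 V → ℝ) (u v : V) :
    DD hG w u v = ∑ e : Sym2 V, if e ∈ (tp hG u v).edges then w e else 0 := by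
  classical
  have hnd : (tp hG u v).edges.Nodup := (tp_isPath hG u v).isTrail.edges_nodup
  rw [DD, ← List.sum_toFinset w hnd]
  calc (tp hG u v).edges.toFinset.sum w
      = ∑ e ∈ (tp hG u v).edges.toFinset, (if e ∈ (tp hG u v).edges then w e else 0) := by
        refine Finset.sum_congr rfl ?_
        intro e he
        rw [if_pos (List.mem_toFinset.mp he)]
    _ = ∑ e : Sym2 V, if e ∈ (tp hG u v).edges then w e else 0 := by
        refine Finset.sum_subset (Finset.subset_univ _) ?_
        intro e _ he
        rw [if_neg (fun h => he (List.mem_toFinset.mpr h))]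


lemma coeff (hG : G.IsTree) (w : Sym2 V → ℝ) (α β u v : V) (e : Sym2 V) :
    ((if e ∈ (tp hG α u).edges then w e else 0) - (if e ∈ (tp hG α v).edges then w e else 0))
      - ((if e ∈ (tp hG β u).edges then w e else 0) - (if e ∈ (tp hG β v).edges then w e else 0))
    = if e ∈ (tp hG u v).edges ∧ e ∈ (tp hG α β).edges then
        (if SS (G := G) e α u then -(2 * w e) else 2 * w e) else 0 := by
  classical
  simp only [mem_tp_iff hG]
  by_cases hU : SS (G := G) e u v <;> by_cases hS : SS (G := G) e α β <;>
    by_cases hA : SS (G := G) e α u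
  · have hB : SS (G := G) e α v := hA.trans hU
    have hC : SS (G := G) e β u := hS.symm.trans hA
    have hD : SS (G := G) e β v := hS.symm.trans hB
    simp [hA, hB, hC, hD, hU]
  · have hB : ¬ SS (G := G) e α v := fun h => hA (h.trans hU.symm)
    have hC : ¬ SS (G := G) e β u := fun h => hA (hS.trans h)
    have hD : ¬ SS (G := G) e β v := fun h => hA (hS.trans (h.trans hU.symm))
    simp [hA, hB, hC, hD, hU]
  · have hB : SS (G := G) e α v := hA.trans hU
    have hC : ¬ SS (G := G) e β u := fun h => hS (hA.trans h.symm)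
    have hD : ¬ SS (G := G) e β v := fun h => hS (hB.trans h.symm)
    simp [hA, hB, hC, hD, hU]
  · have hB : ¬ SS (G := G) e α v := fun h => hA (h.trans hU.symm)
    have hC : SS (G := G) e β u := (P2 hG (fun h => hA h.symm) (fun h => hS h.symm)).symm
    have hD : SS (G := G) e β v := hC.trans hU
    simp [hA, hB, hC, hD, hU]
  · have hB : ¬ SS (G := G) e α v := fun h => hU (hA.symm.trans h)
    have hC : SS (G := G) e β u := hS.symm.trans hA
    have hD : ¬ SS (G := G) e β v := fun h => hB (hS.trans h)
    simp [hA, hB, hC, hD, hS]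
  · have hB : SS (G := G) e α v := P2 hG hA (fun h => hU h.symm)
    have hC : ¬ SS (G := G) e β u := fun h => hA (hS.trans h)
    have hD : SS (G := G) e β v := hS.symm.trans hB
    simp [hA, hB, hC, hD, hS]
  · have hB : ¬ SS (G := G) e α v := fun h => hU (hA.symm.trans h)
    have hC : ¬ SS (G := G) e β u := fun h => hS (hA.trans h.symm)
    have hD : SS (G := G) e β v := P2 hG hC (fun h => hU h.symm)
    simp [hA, hB, hC, hD, hU, hS]
    ring
  · have hB : SS (G := G) e α v := P2 hG hA (fun h => hU h.symm)
    have hC : SS (G := G) e β u := (P2 hG (fun h => hA h.symm) (fun h => hS h.symm)).symm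
    have hD : ¬ SS (G := G) e β v := fun h => hS (hB.trans h.symm)
    simp [hA, hB, hC, hD, hU, hS]
    ring


lemma split_identity (hG : G.IsTree) (w : Sym2 V → ℝ) (hw : ∀ e ∈ G.edgeSet, 0 ≤ w e)
    (α β u v : V) :
    |((DD hG w α u - DD hG w β u) / 2) - ((DD hG w α v - DD hG w β v) / 2)|
      + DD hG (fun e => if e ∈ (tp hG α β).edges then 0 else w e) u v
    = DD hG w u v := by
  classical
  set w' : Sym2 V → ℝ := fun e => if e ∈ (tp hG α β).edges then 0 else w e with hw'def
  have key : ((DD hG w α u - DD hG w β u) / 2) - ((DD hG w α v - DD hG w β v) / 2)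
      = ∑ e : Sym2 V, if e ∈ (tp hG u v).edges ∧ e ∈ (tp hG α β).edges then
          (if SS (G := G) e α u then -(w e) else w e) else 0 := by
    have h4 := fun x y => DD_eq_sum hG w x y
    rw [h4 α u, h4 α v, h4 β u, h4 β v]
    have key2 : ((∑ e : Sym2 V, if e ∈ (tp hG α u).edges then w e else 0)
          - (∑ e : Sym2 V, if e ∈ (tp hG α v).edges then w e else 0))
        - ((∑ e : Sym2 V, if e ∈ (tp hG β u).edges then w e else 0)
          - (∑ e : Sym2 V, if e ∈ (tp hG β v).edges then w e else 0))
        = ∑ e : Sym2 V, if e ∈ (tp hG u v).edges ∧ e ∈ (tp hG α β).edges then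
            (if SS (G := G) e α u then -(2 * w e) else 2 * w e) else 0 := by
      rw [← Finset.sum_sub_distrib, ← Finset.sum_sub_distrib, ← Finset.sum_sub_distrib]
      exact Finset.sum_congr rfl (fun e _ => coeff hG w α β u v e)
    have key3 : (∑ e : Sym2 V, if e ∈ (tp hG u v).edges ∧ e ∈ (tp hG α β).edges then
            (if SS (G := G) e α u then -(2 * w e) else 2 * w e) else 0)
        = (∑ e : Sym2 V, if e ∈ (tp hG u v).edges ∧ e ∈ (tp hG α β).edges then
            (if SS (G := G) e α u then -(w e) else w e) else 0) * 2 := by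
      rw [Finset.sum_mul]
      refine Finset.sum_congr rfl ?_
      intro e _
      by_cases h1 : e ∈ (tp hG u v).edges ∧ e ∈ (tp hG α β).edges
      · rw [if_pos h1, if_pos h1]
        by_cases h2 : SS (G := G) e α u
        · rw [if_pos h2, if_pos h2]; ring
        · rw [if_neg h2, if_neg h2]; ring
      · rw [if_neg h1, if_neg h1]; ring
    linarith [key2, key3]
  have hDw' : DD hG w' u v = ∑ e : Sym2 V,
      if e ∈ (tp hG u v).edges ∧ e ∉ (tp hG α β).edges then w e else 0 := by
    rw [DD_eq_sum hG w' u v]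
    refine Finset.sum_congr rfl ?_
    intro e _
    by_cases h1 : e ∈ (tp hG u v).edges
    · rw [if_pos h1]
      by_cases h2 : e ∈ (tp hG α β).edges
      · rw [hw'def]; simp only [if_pos h2]
        rw [if_neg (fun h => h.2 h2)]
      · rw [hw'def]; simp only [if_neg h2]
        rw [if_pos ⟨h1, h2⟩]
    · rw [if_neg h1, if_neg (fun h => h1 h.1)]
  have hDw : DD hG w u v
      = (∑ e : Sym2 V, if e ∈ (tp hG u v).edges ∧ e ∈ (tp hG α β).edges then w e else 0)
        + ∑ e : Sym2 V, if e ∈ (tp hG u v).edges ∧ e ∉ (tp hG α β).edges then w e else 0 := by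
    rw [DD_eq_sum hG w u v, ← Finset.sum_add_distrib]
    refine Finset.sum_congr rfl ?_
    intro e _
    by_cases h1 : e ∈ (tp hG u v).edges
    · by_cases h2 : e ∈ (tp hG α β).edges
      · rw [if_pos h1, if_pos ⟨h1, h2⟩, if_neg (fun h => h.2 h2)]; ring
      · rw [if_pos h1, if_neg (fun h => h2 h.2), if_pos ⟨h1, h2⟩]; ring
    · rw [if_neg h1, if_neg (fun h => h1 h.1), if_neg (fun h => h1 h.1)]; ring
  -- it remains to show |∑ signed| = ∑ plus-part
  have habs : |∑ e : Sym2 V, if e ∈ (tp hG u v).edges ∧ e ∈ (tp hG α β).edges then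
          (if SS (G := G) e α u then -(w e) else w e) else 0|
      = ∑ e : Sym2 V, if e ∈ (tp hG u v).edges ∧ e ∈ (tp hG α β).edges then w e else 0 := by
    have hwnn : ∀ e : Sym2 V, e ∈ (tp hG u v).edges → 0 ≤ w e :=
      fun e he => hw e (Walk.edges_subset_edgeSet _ he)
    by_cases hall : ∀ e : Sym2 V, e ∈ (tp hG u v).edges → e ∈ (tp hG α β).edges →
        SS (G := G) e α u
    · have : ∑ e : Sym2 V, (if e ∈ (tp hG u v).edges ∧ e ∈ (tp hG α β).edges then
          (if SS (G := G) e α u then -(w e) else w e) else 0)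
          = - ∑ e : Sym2 V, if e ∈ (tp hG u v).edges ∧ e ∈ (tp hG α β).edges then w e else 0 := by
        rw [← Finset.sum_neg_distrib]
        refine Finset.sum_congr rfl ?_
        intro e _
        by_cases h1 : e ∈ (tp hG u v).edges ∧ e ∈ (tp hG α β).edges
        · rw [if_pos h1, if_pos h1, if_pos (hall e h1.1 h1.2)]
        · rw [if_neg h1, if_neg h1]; ring
      rw [this, abs_neg, abs_of_nonneg]
      refine Finset.sum_nonneg ?_
      intro e _
      by_cases h1 : e ∈ (tp hG u v).edges ∧ e ∈ (tp hG α β).edges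
      · rw [if_pos h1]; exact hwnn e h1.1
      · rw [if_neg h1]
    · push_neg at hall
      obtain ⟨e₀, he₀uv, he₀sp, he₀ss⟩ := hall
      have hnone : ∀ e : Sym2 V, e ∈ (tp hG u v).edges → e ∈ (tp hG α β).edges →
          ¬ SS (G := G) e α u := by
        intro e heuv hesp hss
        exact he₀ss ((sign_const hG hesp he₀sp heuv he₀uv).mp hss)
      have : ∑ e : Sym2 V, (if e ∈ (tp hG u v).edges ∧ e ∈ (tp hG α β).edges then
          (if SS (G := G) e α u then -(w e) else w e) else 0)
          = ∑ e : Sym2 V, if e ∈ (tp hG u v).edges ∧ e ∈ (tp hG α β).edges then w e else 0 := by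
        refine Finset.sum_congr rfl ?_
        intro e _
        by_cases h1 : e ∈ (tp hG u v).edges ∧ e ∈ (tp hG α β).edges
        · rw [if_pos h1, if_pos h1, if_neg (hnone e h1.1 h1.2)]
        · rw [if_neg h1, if_neg h1]
      rw [this, abs_of_nonneg]
      refine Finset.sum_nonneg ?_
      intro e _
      by_cases h1 : e ∈ (tp hG u v).edges ∧ e ∈ (tp hG α β).edges
      · rw [if_pos h1]; exact hwnn e h1.1
      · rw [if_neg h1]
  rw [key, habs, hDw', hDw]

lemma not_mem_tp_self (hG : G.IsTree) {u : V} {e : Sym2 V} (h : e ∈ (tp hG u u).edges) :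
    False := by
  rw [tp_self hG u] at h
  simp at h

/-- the coverage predicate -/
def covers (hG : G.IsTree) (w : Sym2 V → ℝ) (T : Finset V) : Prop :=
  ∀ e ∈ G.edgeSet, 0 < w e → ∃ s ∈ T, ∃ t ∈ T, e ∈ (tp hG s t).edges

/-- the disjointness contradiction -/
lemma disj (hG : G.IsTree) {e₁ e₂ : Sym2 V} {a b c d : V}
    (h1 : SS (G := G) e₁ a b) (h2 : SS (G := G) e₁ c d) (h3 : ¬ SS (G := G) e₁ a c)
    (hab : e₂ ∈ (tp hG a b).edges) (hcd : e₂ ∈ (tp hG c d).edges) : False := by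
  revert hab hcd
  induction e₂ using Sym2.inductionOn with
  | hf p q =>
    intro hab hcd
    have hpab : p ∈ (tp hG a b).support := Walk.fst_mem_support_of_mem_edges _ hab
    have hpcd : p ∈ (tp hG c d).support := Walk.fst_mem_support_of_mem_edges _ hcd
    exact h3 ((support_side hG h1 hpab).trans (support_side hG h2 hpcd).symm)

/-- removing one endpoint of a spine preserves coverage -/
lemma erase_covers (hG : G.IsTree) {w : Sym2 V → ℝ} {T : Finset V}
    (hcov : covers hG w T) {a b : V} (ha : a ∈ T) (hab : a ≠ b) :
    covers hG (fun e => if e ∈ (tp hG a b).edges then 0 else w e) (T.erase b) := by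
  intro e he hpos
  have hpos : (0:ℝ) < if e ∈ (tp hG a b).edges then 0 else w e := hpos
  by_cases hsp : e ∈ (tp hG a b).edges
  · rw [if_pos hsp] at hpos; exact absurd hpos (lt_irrefl 0)
  rw [if_neg hsp] at hpos
  have hSab : SS (G := G) e a b := not_not.mp (fun hss => hsp ((mem_tp_iff hG e).mpr hss))
  obtain ⟨s, hs, t, ht, hest⟩ := hcov e he hpos
  have hkey : ∀ s : V, s ∈ T → e ∈ (tp hG s b).edges →
      ∃ s' ∈ T.erase b, ∃ t' ∈ T.erase b, e ∈ (tp hG s' t').edges := by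
    intro s hs hest
    have hsb : ¬ SS (G := G) e s b := (mem_tp_iff hG e).mp hest
    have hsne : s ≠ b := fun h => hsb (h ▸ Reachable.refl _)
    have hsa : ¬ SS (G := G) e s a := fun h => hsb (h.trans hSab)
    exact ⟨s, Finset.mem_erase.mpr ⟨hsne, hs⟩, a, Finset.mem_erase.mpr ⟨hab, ha⟩,
      (mem_tp_iff hG e).mpr hsa⟩
  by_cases hsb : s = b
  · by_cases htb : t = b
    · rw [hsb, htb] at hest; exact absurd hest (fun h => not_mem_tp_self hG h)
    · rw [hsb] at hest
      have hsym : e ∈ (tp hG t b).edges := by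
        have : ¬ SS (G := G) e b t := (mem_tp_iff hG e).mp hest
        exact (mem_tp_iff hG e).mpr (fun h => this h.symm)
      exact hkey t ht hsym
  · by_cases htb : t = b
    · rw [htb] at hest
      exact hkey s hs hest
    · exact ⟨s, Finset.mem_erase.mpr ⟨hsb, hs⟩, t, Finset.mem_erase.mpr ⟨htb, ht⟩, hest⟩


lemma covers_of_good (hG : G.IsTree) {w : Sym2 V → ℝ} {a b : V} {C : Finset V}
    (hgood : ∀ e ∈ G.edgeSet, 0 < w e → e ∉ (tp hG a b).edges →
      ∃ s ∈ C, ∃ t ∈ C, e ∈ (tp hG s t).edges) :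
    covers hG (fun e => if e ∈ (tp hG a b).edges then 0 else w e) C := by
  intro e he hpos
  have hpos : (0:ℝ) < if e ∈ (tp hG a b).edges then 0 else w e := hpos
  by_cases hsp : e ∈ (tp hG a b).edges
  · rw [if_pos hsp] at hpos; exact absurd hpos (lt_irrefl 0)
  rw [if_neg hsp] at hpos
  exact hgood e he hpos hsp

lemma crowd_side (hG : G.IsTree) {e : Sym2 V} {aa bb : V} {C : Finset V}
    (hSSC : ∀ s ∈ C, ∀ t ∈ C, SS (G := G) e s t) (hSab : SS (G := G) e aa bb)
    {s t : V} (hs : s = aa ∨ s = bb ∨ s ∈ C) (ht : t = aa ∨ t = bb ∨ t ∈ C)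
    (hn : ¬ SS (G := G) e s t) : ∀ t' ∈ C, ¬ SS (G := G) e aa t' := by
  -- first: derive some t₀ ∈ C with ¬ SS e aa t₀
  have key : ∃ t₀ ∈ C, ¬ SS (G := G) e aa t₀ := by
    rcases hs with rfl | rfl | hsC
    · rcases ht with rfl | rfl | htC
      · exact absurd (Reachable.refl _) hn
      · exact absurd hSab hn
      · exact ⟨t, htC, hn⟩
    · rcases ht with rfl | rfl | htC
      · exact absurd hSab.symm hn
      · exact absurd (Reachable.refl _) hn
      · exact ⟨t, htC, fun h => hn (hSab.symm.trans h)⟩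
    · rcases ht with rfl | rfl | htC
      · exact ⟨s, hsC, fun h => hn h.symm⟩
      · exact ⟨s, hsC, fun h => hn (h.symm.trans hSab)⟩
      · exact absurd (hSSC s hsC t htC) hn
  obtain ⟨t₀, ht₀, hnt₀⟩ := key
  intro t' ht' h
  exact hnt₀ (h.trans (hSSC t' ht' t₀ ht₀))

lemma mem_T_cases {T : Finset V} {a b x : V} (hx : x ∈ T) :
    x = a ∨ x = b ∨ x ∈ (T.erase a).erase b := by
  by_cases h1 : x = a
  · exact Or.inl h1
  by_cases h2 : x = b
  · exact Or.inr (Or.inl h2)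
  · exact Or.inr (Or.inr (Finset.mem_erase.mpr ⟨h2, Finset.mem_erase.mpr ⟨h1, hx⟩⟩))

lemma good_pair (hG : G.IsTree) {w : Sym2 V → ℝ} {T : Finset V} (hcov : covers hG w T)
    (hT : T.card = 2 ∨ 4 ≤ T.card) :
    ∃ a ∈ T, ∃ b ∈ T, a ≠ b ∧
      covers hG (fun e => if e ∈ (tp hG a b).edges then 0 else w e) ((T.erase a).erase b) := by
  have h2 : 1 < T.card := by rcases hT with h | h <;> omega
  obtain ⟨a, ha, b, hb, hab⟩ := Finset.one_lt_card.mp h2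
  rcases hT with h2' | h4
  · refine ⟨a, ha, b, hb, hab, covers_of_good hG ?_⟩
    intro e he hpos hesp
    exfalso
    have hTab : T = {a, b} := by
      apply (Finset.eq_of_subset_of_card_le ?_ ?_).symm
      · intro x hx
        simp only [Finset.mem_insert, Finset.mem_singleton] at hx
        rcases hx with rfl | rfl <;> assumption
      · rw [h2', Finset.card_insert_of_notMem (by simpa using hab), Finset.card_singleton]
    obtain ⟨s, hs, t, ht, hest⟩ := hcov e he hpos
    rw [hTab] at hs ht
    simp only [Finset.mem_insert, Finset.mem_singleton] at hs ht
    rcases hs with rfl | rfl <;> rcases ht with rfl | rfl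
    · exact not_mem_tp_self hG hest
    · exact hesp hest
    · refine hesp ((mem_tp_iff hG e).mpr (fun h => ?_))
      exact ((mem_tp_iff hG e).mp hest) h.symm
    · exact not_mem_tp_self hG hest
  · -- main case
    set C : Finset V := (T.erase a).erase b with hCdef
    by_cases hgab : ∀ e ∈ G.edgeSet, 0 < w e → e ∉ (tp hG a b).edges →
        ∃ s ∈ C, ∃ t ∈ C, e ∈ (tp hG s t).edges
    · exact ⟨a, ha, b, hb, hab, covers_of_good hG hgab⟩
    push_neg at hgab
    obtain ⟨e₁, he₁, hw₁, hsp₁, hunc₁⟩ := hgab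
    have hSS₁ : ∀ s ∈ C, ∀ t ∈ C, SS (G := G) e₁ s t := by
      intro s hs t ht
      exact not_not.mp (fun h => (hunc₁ s hs t ht) ((mem_tp_iff hG e₁).mpr h))
    have hSab₁ : SS (G := G) e₁ a b :=
      not_not.mp (fun h => hsp₁ ((mem_tp_iff hG e₁).mpr h))
    have hCcard : 2 ≤ C.card := by
      rw [hCdef, Finset.card_erase_of_mem (Finset.mem_erase.mpr ⟨hab.symm, hb⟩),
        Finset.card_erase_of_mem ha]
      omega
    obtain ⟨c, hc⟩ := Finset.card_pos.mp (by omega : 0 < C.card)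
    obtain ⟨d, hd'⟩ := Finset.card_pos.mp
      (by rw [Finset.card_erase_of_mem hc]; omega : 0 < (C.erase c).card)
    have hdc : d ≠ c := (Finset.mem_erase.mp hd').1
    have hd : d ∈ C := (Finset.mem_erase.mp hd').2
    have hcb : c ≠ b := (Finset.mem_erase.mp hc).1
    have hca : c ≠ a := (Finset.mem_erase.mp (Finset.mem_erase.mp hc).2).1
    have hdb : d ≠ b := (Finset.mem_erase.mp hd).1
    have hda : d ≠ a := (Finset.mem_erase.mp (Finset.mem_erase.mp hd).2).1
    have hcT : c ∈ T := (Finset.mem_erase.mp (Finset.mem_erase.mp hc).2).2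
    -- the side of e₁ : everything in C is away from a
    have hA1 : ∀ t ∈ C, ¬ SS (G := G) e₁ a t := by
      obtain ⟨s₁, hs₁, t₁, ht₁, h₁⟩ := hcov e₁ he₁ hw₁
      exact crowd_side hG hSS₁ hSab₁ (mem_T_cases hs₁) (mem_T_cases ht₁)
        ((mem_tp_iff hG e₁).mp h₁)
    -- now show the pair (a, c) is good
    refine ⟨a, ha, c, hcT, fun h => hca h.symm, covers_of_good hG ?_⟩
    by_contra hgac
    push_neg at hgac
    obtain ⟨e₂, he₂, hw₂, hsp₂, hunc₂⟩ := hgac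
    set C₂ : Finset V := (T.erase a).erase c with hC₂def
    have hSS₂ : ∀ s ∈ C₂, ∀ t ∈ C₂, SS (G := G) e₂ s t := by
      intro s hs t ht
      exact not_not.mp (fun h => (hunc₂ s hs t ht) ((mem_tp_iff hG e₂).mpr h))
    have hSac₂ : SS (G := G) e₂ a c :=
      not_not.mp (fun h => hsp₂ ((mem_tp_iff hG e₂).mpr h))
    have hA2 : ∀ t ∈ C₂, ¬ SS (G := G) e₂ a t := by
      obtain ⟨s₂, hs₂, t₂, ht₂, h₂⟩ := hcov e₂ he₂ hw₂
      exact crowd_side hG hSS₂ hSac₂ (mem_T_cases hs₂) (mem_T_cases ht₂)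
        ((mem_tp_iff hG e₂).mp h₂)
    have hbC₂ : b ∈ C₂ := Finset.mem_erase.mpr ⟨fun h => hcb h.symm,
      Finset.mem_erase.mpr ⟨fun h => hab h.symm, hb⟩⟩
    have hdC₂ : d ∈ C₂ := Finset.mem_erase.mpr ⟨hdc,
      Finset.mem_erase.mpr ⟨hda, (Finset.mem_erase.mp (Finset.mem_erase.mp hd).2).2⟩⟩
    have hE₂ab : e₂ ∈ (tp hG a b).edges := (mem_tp_iff hG e₂).mpr (hA2 b hbC₂)
    have hE₂cd : e₂ ∈ (tp hG c d).edges := (mem_tp_iff hG e₂).mpr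
      (fun h => (hA2 d hdC₂) (hSac₂.trans h))
    exact disj hG hSab₁ (hSS₁ c hc d hd) (hA1 c hc) hE₂ab hE₂cd

lemma pilp_dist {k : ℕ} (x y : PiLp 1 (fun _ : Fin k => ℝ)) :
    dist x y = ∑ i, |x i - y i| := by
  rw [PiLp.dist_eq_sum (by norm_num : (0:ℝ) < (1 : ENNReal).toReal)]
  simp [Real.dist_eq, Real.rpow_natCast]

lemma DD_zero (hG : G.IsTree) {w : Sym2 V → ℝ} (hw : ∀ e ∈ G.edgeSet, 0 ≤ w e)
    (h0 : ∀ e ∈ G.edgeSet, 0 < w e → False) (u v : V) : DD hG w u v = 0 := by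
  apply List.sum_eq_zero
  intro x hx
  rw [List.mem_map] at hx
  obtain ⟨e, he, rfl⟩ := hx
  have heE := Walk.edges_subset_edgeSet _ he
  by_contra hne
  exact h0 e heE (lt_of_le_of_ne (hw e heE) (Ne.symm hne))

lemma step (hG : G.IsTree) {w : Sym2 V → ℝ} (hw : ∀ e ∈ G.edgeSet, 0 ≤ w e) (a b : V) {n : ℕ}
    (f' : V → PiLp 1 (fun _ : Fin n => ℝ))
    (hf' : ∀ u v, dist (f' u) (f' v)
      = DD hG (fun e => if e ∈ (tp hG a b).edges then 0 else w e) u v) :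
    ∃ f : V → PiLp 1 (fun _ : Fin (n+1) => ℝ), ∀ u v, dist (f u) (f v) = DD hG w u v := by
  refine ⟨fun v => WithLp.toLp 1 (Fin.cons ((DD hG w a v - DD hG w b v)/2) (f' v) : Fin (n+1) → ℝ), ?_⟩
  intro u v
  rw [pilp_dist, Fin.sum_univ_succ]
  simp only [WithLp.ofLp_toLp, Fin.cons_zero, Fin.cons_succ]
  have h1 : ∑ i : Fin n, |f' u i - f' v i| = dist (f' u) (f' v) := (pilp_dist _ _).symm
  rw [h1, hf' u v]
  exact split_identity hG w hw a b u v

lemma main (hG : G.IsTree) : ∀ (n : ℕ) (w : Sym2 V → ℝ), (∀ e ∈ G.edgeSet, 0 ≤ w e) →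
    ∀ T : Finset V, T.card ≤ 2 * n → covers hG w T →
    ∃ f : V → PiLp 1 (fun _ : Fin n => ℝ), ∀ u v, dist (f u) (f v) = DD hG w u v := by
  intro n
  induction n with
  | zero =>
    intro w hw T hT hcov
    have hTe : T = ∅ := Finset.card_eq_zero.mp (Nat.le_zero.mp (by simpa using hT))
    refine ⟨fun _ => 0, fun u v => ?_⟩
    rw [show (fun (_:V) => (0 : PiLp 1 (fun _ : Fin _ => ℝ))) u = (fun (_:V) => (0 : PiLp 1 (fun _ : Fin _ => ℝ))) v from rfl, _root_.dist_self, DD_zero hG hw ?_ u v]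
    intro e he hpos
    obtain ⟨s, hs, -⟩ := hcov e he hpos
    rw [hTe] at hs
    exact absurd hs (Finset.notMem_empty s)
  | succ n ih =>
    intro w hw T hT hcov
    by_cases hT1 : T.card ≤ 1
    · refine ⟨fun _ => 0, fun u v => ?_⟩
      rw [show (fun (_:V) => (0 : PiLp 1 (fun _ : Fin _ => ℝ))) u = (fun (_:V) => (0 : PiLp 1 (fun _ : Fin _ => ℝ))) v from rfl, _root_.dist_self, DD_zero hG hw ?_ u v]
      intro e he hpos
      obtain ⟨s, hs, t, ht, hest⟩ := hcov e he hpos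
      have : s = t := Finset.card_le_one.mp hT1 s hs t ht
      exact not_mem_tp_self hG (this ▸ hest)
    · have hw' : ∀ (a b : V), ∀ e ∈ G.edgeSet,
          0 ≤ (fun e => if e ∈ (tp hG a b).edges then 0 else w e) e := by
        intro a b e he
        by_cases h : e ∈ (tp hG a b).edges
        · simp [h]
        · simp only [if_neg h]; exact hw e he
      by_cases hsmall : T.card ≤ 2*n + 1
      · obtain ⟨a, ha, b, hb, hab⟩ := Finset.one_lt_card.mp (show 1 < T.card by omega)
        have hcard : (T.erase b).card ≤ 2*n := by
          rw [Finset.card_erase_of_mem hb]; omega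
        obtain ⟨f', hf'⟩ := ih _ (hw' a b) (T.erase b) hcard (erase_covers hG hcov ha hab)
        exact step hG hw a b f' hf'
      · obtain ⟨a, ha, b, hb, hab, hcov'⟩ := good_pair hG hcov (by omega)
        have hcard : ((T.erase a).erase b).card ≤ 2*n := by
          rw [Finset.card_erase_of_mem (Finset.mem_erase.mpr ⟨hab.symm, hb⟩),
            Finset.card_erase_of_mem ha]; omega
        obtain ⟨f', hf'⟩ := ih _ (hw' a b) ((T.erase a).erase b) hcard hcov'
        exact step hG hw a b f' hf'

lemma exists_leaf_side (hG : G.IsTree) {x y : V} (hxy : G.Adj x y) :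
    ∃ l : V, G.degree l = 1 ∧ SS (G := G) s(x, y) l x := by
  classical
  set S : Finset V := univ.filter (fun z => SS (G := G) s(x, y) z x) with hSdef
  have hxS : x ∈ S := Finset.mem_filter.mpr ⟨Finset.mem_univ _, Reachable.refl _⟩
  obtain ⟨l, hlS, hmax⟩ := S.exists_max_image (fun z => (tp hG y z).length) ⟨x, hxS⟩
  have hlx : SS (G := G) s(x, y) l x := (Finset.mem_filter.mp hlS).2
  have hnly : ¬ SS (G := G) s(x, y) l y := fun h => bridge_not_SS hG hxy (hlx.symm.trans h)
  refine ⟨l, ?_, hlx⟩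
  have hly_ne : l ≠ y := fun h => hnly (h ▸ Reachable.refl _)
  cases hP : tp hG l y with
  | nil => exact absurd rfl hly_ne
  | @cons _ q _ hadj W =>
    have hPath : (Walk.cons hadj W).IsPath := hP ▸ tp_isPath hG l y
    have hWl : W.IsPath ∧ l ∉ W.support := (Walk.cons_isPath_iff hadj W).mp hPath
    have claim : ∀ r : V, G.Adj l r → r = q := by
      intro r hr
      by_contra hrq
      have hrl : l ≠ r := G.ne_of_adj hr
      -- r is not on the path from l to y
      have hrsup : r ∉ (tp hG l y).support := by
        intro hr_sup
        have hsingle : (Walk.cons hr Walk.nil).IsPath := by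
          rw [Walk.cons_isPath_iff]
          constructor
          · exact Walk.IsPath.nil
          · simp [hrl]
        have h1 : Walk.cons hr Walk.nil = tp hG l r := tp_unique hG hsingle
        have h2 : (tp hG l y).takeUntil r hr_sup = tp hG l r :=
          tp_unique hG ((tp_isPath hG l y).takeUntil hr_sup)
        have h3 : s(l, r) ∈ (tp hG l r).edges := by
          rw [← h1]; simp
        rw [← h2] at h3
        have h4 : s(l, r) ∈ (tp hG l y).edges := Walk.edges_takeUntil_subset _ hr_sup h3
        rw [hP, Walk.edges_cons] at h4
        rcases List.mem_cons.mp h4 with h5 | h5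
        · rw [Sym2.eq_iff] at h5
          rcases h5 with ⟨-, h6⟩ | ⟨h6, -⟩
          · exact hrq h6
          · exact (hadj.ne) h6
        · exact hWl.2 (Walk.fst_mem_support_of_mem_edges W h5)
      -- extend the path by the edge (l, r)
      have hext : (Walk.cons hr.symm (tp hG l y)).IsPath := by
        rw [Walk.cons_isPath_iff]
        exact ⟨tp_isPath hG l y, hrsup⟩
      have hPr : Walk.cons hr.symm (tp hG l y) = tp hG r y := tp_unique hG hext
      -- r is on the x side
      have hrS : r ∈ S := by
        have hmem : s(x, y) ∈ (tp hG r y).edges := by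
          rw [← hPr, Walk.edges_cons]
          refine List.mem_cons.mpr (Or.inr ?_)
          exact (mem_tp_iff hG _).mpr hnly
        have hnry : ¬ SS (G := G) s(x, y) r y := (mem_tp_iff hG _).mp hmem
        rcases two_sides hG (x := x) (y := y) r with h | h
        · exact Finset.mem_filter.mpr ⟨Finset.mem_univ _, h⟩
        · exact absurd h hnry
      -- contradiction with maximality
      have hrev1 : (tp hG y r) = (tp hG r y).reverse :=
        (tp_unique hG ((tp_isPath hG r y).reverse)).symm
      have hrev2 : (tp hG y l) = (tp hG l y).reverse :=
        (tp_unique hG ((tp_isPath hG l y).reverse)).symm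
      have hlen : (tp hG y r).length = (tp hG y l).length + 1 := by
        rw [hrev1, hrev2, Walk.length_reverse, Walk.length_reverse, ← hPr, Walk.length_cons]
      have := hmax r hrS
      simp only [hlen] at this
      omega
    have hnbr : G.neighborFinset l = {q} := by
      ext r
      simp only [mem_neighborFinset, Finset.mem_singleton]
      constructor
      · exact claim r
      · rintro rfl; exact hadj
    rw [← SimpleGraph.card_neighborFinset_eq_degree, hnbr, Finset.card_singleton]


end TreeEmbed

/-- A finite metric tree with at most `2n` leaves embeds isometrically into
`(ℝ^n, d_1)`: if `G` is a finite tree with positive edge weights `w`, `dT` is the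
associated tree metric (the weight of the unique path between two vertices), and
`G` has at most `2n` leaves, then there is `f : V → ℝ^n` with
`d_1(f u, f v) = dT u v` for all `u, v`. -/
theorem tree_embeds_into_l1 (n : ℕ) (hn : 0 < n) (V : Type*) [Fintype V]
    [DecidableEq V] (G : SimpleGraph V) [DecidableRel G.Adj]
    (hG : G.IsTree)
    (w : Sym2 V → ℝ) (hw : ∀ e ∈ G.edgeSet, 0 < w e)
    (dT : V → V → ℝ)
    (hdT : ∀ (u v : V) (p : G.Walk u v), p.IsPath → dT u v = (p.edges.map w).sum)
    (hleaves : (Finset.univ.filter fun v : V => G.degree v = 1).card ≤ 2 * n) :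
    ∃ f : V → PiLp 1 (fun _ : Fin n => ℝ),
      ∀ u v : V, dist (f u) (f v) = dT u v := by
  classical
  have hw0 : ∀ e ∈ G.edgeSet, 0 ≤ w e := fun e he => (hw e he).le
  have hcov : TreeEmbed.covers hG w (Finset.univ.filter fun v : V => G.degree v = 1) := by
    intro e he hpos
    clear hpos
    revert he
    induction e using Sym2.inductionOn with
    | hf x y =>
      intro he
      have hxy : G.Adj x y := G.mem_edgeSet.mp he
      obtain ⟨l₁, hd₁, hs₁⟩ := TreeEmbed.exists_leaf_side hG hxy
      obtain ⟨l₂, hd₂, hs₂⟩ := TreeEmbed.exists_leaf_side hG hxy.symm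
      have hs₂' : TreeEmbed.SS (G := G) s(x, y) l₂ y := by
        rwa [Sym2.eq_swap] at hs₂
      have hd₁' : G.degree l₁ = 1 := by convert hd₁ <;> exact Subsingleton.elim _ _
      have hd₂' : G.degree l₂ = 1 := by convert hd₂ <;> exact Subsingleton.elim _ _
      refine ⟨l₁, Finset.mem_filter.mpr ⟨Finset.mem_univ _, hd₁'⟩,
        l₂, Finset.mem_filter.mpr ⟨Finset.mem_univ _, hd₂'⟩, ?_⟩
      refine (TreeEmbed.mem_tp_iff hG _).mpr (fun hss => ?_)
      exact TreeEmbed.bridge_not_SS hG hxy (hs₁.symm.trans (hss.trans hs₂'))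
  obtain ⟨f, hf⟩ := TreeEmbed.main hG n w hw0 _ hleaves hcov
  refine ⟨f, fun u v => ?_⟩
  rw [hf u v, TreeEmbed.DD]
  exact (hdT u v (TreeEmbed.tp hG u v) (TreeEmbed.tp_isPath hG u v)).symm
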